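/- Let α, β⁺, β⁻ be analytic functions on the closed disc {|z| ≤ R} such that sup_{|z|=R} |α(z)|/R < 1/3 and sup_{|z|=R} |β^±(z)|/R < 1/3. Then the equation (z − α(z))² = β⁺(z)β⁻(z) has exactly two roots (counted with multiplicity) in the open disc {|z| < R}. -/

import Mathlib

open Metric Set Complex Filter
open scoped Topology

noncomputable def rcInt (R : ℝ) (G : ℂ → ℂ) : ℂ := ∮ z in C((0:ℂ), R), deriv G z / G z

lemma rext_an {R : ℝ} (hR : 0 ≤ R) {G : ℂ → ℂ}
    (h : AnalyticOnNhd ℂ G (closedBall 0 R)) :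
    ∃ R' > R, AnalyticOnNhd ℂ G (closedBall 0 R') := by
  obtain ⟨δ, hδ, hsub⟩ := (isCompact_closedBall (0:ℂ) R).exists_thickening_subset_open
      (isOpen_analyticAt ℂ G) h
  refine ⟨R + δ/2, by linarith, fun z hz => hsub ?_⟩
  rw [thickening_closedBall hδ hR]
  rw [mem_closedBall] at hz
  rw [mem_ball]
  linarith

lemma rnot_ev_zero {R R' : ℝ} (hRR' : R ≤ R') {G : ℂ → ℂ}
    (hG : AnalyticOnNhd ℂ G (closedBall 0 R'))
    (hs : ∃ z ∈ sphere (0:ℂ) R, G z ≠ 0) {v : ℂ} (hv : v ∈ closedBall (0:ℂ) R) :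
    ¬ (∀ᶠ z in 𝓝 v, G z = 0) := by
  intro hev
  obtain ⟨z, hz, hzne⟩ := hs
  have hvp : v ∈ closedBall (0:ℂ) R' := closedBall_subset_closedBall hRR' hv
  have hzp : z ∈ closedBall (0:ℂ) R' := by
    rw [mem_closedBall]
    rw [mem_sphere] at hz
    rw [hz]; exact hRR'
  have := hG.eqOn_zero_of_preconnected_of_frequently_eq_zero
    (convex_closedBall (0:ℂ) R').isPreconnected hvp
    ((hev.filter_mono nhdsWithin_le_nhds).frequently)
  exact hzne (this hzp)

lemma rzeros_finite {R R' : ℝ} (hRR' : R ≤ R') {G : ℂ → ℂ}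
    (hG : AnalyticOnNhd ℂ G (closedBall 0 R'))
    (hs : ∃ z ∈ sphere (0:ℂ) R, G z ≠ 0) :
    Set.Finite {z ∈ closedBall (0:ℂ) R | G z = 0} := by
  by_contra hinf
  have hinf : {z ∈ closedBall (0:ℂ) R | G z = 0}.Infinite := hinf
  obtain ⟨x, hxK, hacc⟩ := hinf.exists_accPt_of_subset_isCompact
    (isCompact_closedBall (0:ℂ) R) (fun z hz => hz.1)
  have hfreq : ∃ᶠ z in 𝓝[≠] x, G z = 0 := by
    rw [accPt_iff_frequently] at hacc
    exact frequently_nhdsWithin_iff.2 (hacc.mono fun z hz => ⟨hz.2.2, hz.1⟩)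
  have hx := (hG x (closedBall_subset_closedBall hRR' hxK)).frequently_zero_iff_eventually_zero.1 hfreq
  exact rnot_ev_zero hRR' hG hs hxK hx

lemma rorder_bound {G : ℂ → ℂ} {v : ℂ} (hG : AnalyticAt ℂ G v)
    (hne : ¬ ∀ᶠ z in 𝓝 v, G z = 0) :
    ∃ n : ℕ, ∀ (j : ℕ) (H : ℂ → ℂ), AnalyticAt ℂ H v →
      (∀ᶠ z in 𝓝 v, G z = (z - v)^j * H z) → j ≤ n := by
  obtain ⟨n, g, hgan, hgne, hev⟩ := hG.exists_eventuallyEq_pow_smul_nonzero_iff.mpr hne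
  refine ⟨n, fun j H hHan hevj => ?_⟩
  by_contra hj
  push_neg at hj
  have key : ∀ᶠ z in 𝓝[≠] v, g z = (z - v)^(j - n) * H z := by
    have h1 : ∀ᶠ z in 𝓝[≠] v, G z = (z - v)^n * g z := by
      filter_upwards [hev.filter_mono nhdsWithin_le_nhds] with z hz
      simpa [smul_eq_mul] using hz
    have h2 := hevj.filter_mono (nhdsWithin_le_nhds (s := {v}ᶜ))
    rw [eventually_nhdsWithin_iff] at h1 h2 ⊢
    filter_upwards [h1, h2] with z hz1 hz2 hzv
    have hzv' : z - v ≠ 0 := sub_ne_zero.mpr hzv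
    have : (z - v)^n * g z = (z - v)^j * H z := by rw [← hz1 hzv, ← hz2 hzv]
    have hjn : j = (j - n) + n := by omega
    rw [hjn, pow_add] at this
    apply mul_left_cancel₀ (pow_ne_zero n hzv')
    rw [this]; ring
  have han2 : AnalyticAt ℂ (fun z => (z - v)^(j - n) * H z) v :=
    ((analyticAt_id.sub analyticAt_const).pow _).mul hHan
  have := (hgan.frequently_eq_iff_eventually_eq han2).1 key.frequently
  have hgv := this.self_of_nhds
  rw [sub_self, zero_pow (by omega : j - n ≠ 0), zero_mul] at hgv
  exact hgne hgv

lemma rcircle_add {f g : ℂ → ℂ} {c : ℂ} {R : ℝ} (hf : CircleIntegrable f c R)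
    (hg : CircleIntegrable g c R) :
    (∮ z in C(c, R), (f z + g z)) = (∮ z in C(c, R), f z) + ∮ z in C(c, R), g z := by
  simp only [circleIntegral, smul_add, intervalIntegral.integral_add hf.out hg.out]

lemma rdslope_an {R : ℝ} {G : ℂ → ℂ} (hG : AnalyticOnNhd ℂ G (closedBall 0 R))
    {w : ℂ} (hw : w ∈ closedBall (0:ℂ) R) :
    AnalyticOnNhd ℂ (dslope G w) (closedBall 0 R) := by
  intro z hz
  rcases eq_or_ne z w with rfl | hzw
  · obtain ⟨p, hp⟩ := hG z hz
    exact ⟨p.fslope, hp.has_fpower_series_dslope_fslope⟩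
  · have h1 : AnalyticAt ℂ (fun y => (y - w)⁻¹ * (G y - G w)) z := by
      exact ((analyticAt_id.sub analyticAt_const).inv (sub_ne_zero.mpr hzw)).mul
        ((hG z hz).sub analyticAt_const)
    apply h1.congr
    filter_upwards [eventually_ne_nhds hzw] with y hy
    rw [dslope_of_ne _ hy, slope_def_field]
    rw [div_eq_inv_mul]

lemma rdslope_eq {G : ℂ → ℂ} {w : ℂ} (hGw : G w = 0) (z : ℂ) :
    G z = (z - w) * dslope G w z := by
  have := sub_smul_dslope G w z
  rw [hGw, sub_zero, smul_eq_mul] at this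
  exact this.symm

lemma rcInt_zero {R : ℝ} (hR : 0 < R) {G : ℂ → ℂ}
    (hG : AnalyticOnNhd ℂ G (closedBall 0 R))
    (hne : ∀ z ∈ closedBall (0:ℂ) R, G z ≠ 0) : rcInt R G = 0 := by
  apply circleIntegral_eq_zero_of_differentiable_on_off_countable hR.le
    (Set.countable_empty)
  · exact (hG.deriv.continuousOn).div hG.continuousOn hne
  · intro z hz
    have hz' : z ∈ closedBall (0:ℂ) R := ball_subset_closedBall hz.1
    exact ((hG.deriv z hz').div (hG z hz') (hne z hz')).differentiableAt

lemma rcInt_dslope {R : ℝ} (hR : 0 < R) {G : ℂ → ℂ}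
    (hG : AnalyticOnNhd ℂ G (closedBall 0 R))
    (hsp : ∀ z ∈ sphere (0:ℂ) R, G z ≠ 0)
    {w : ℂ} (hw : w ∈ ball (0:ℂ) R) (hGw : G w = 0) :
    rcInt R G = 2 * Real.pi * I + rcInt R (dslope G w) := by
  set G₁ := dslope G w with hG₁
  have hG1an : AnalyticOnNhd ℂ G₁ (closedBall 0 R) := rdslope_an hG (ball_subset_closedBall hw)
  have hfac : ∀ z, G z = (z - w) * G₁ z := rdslope_eq hGw
  have hkey : EqOn (fun z => deriv G z / G z)
      (fun z => (z - w)⁻¹ + deriv G₁ z / G₁ z) (sphere (0:ℂ) R) := by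
    intro z hz
    have hzK : z ∈ closedBall (0:ℂ) R := sphere_subset_closedBall hz
    have hzw : z - w ≠ 0 := by
      intro h
      rw [sub_eq_zero] at h
      subst h
      rw [mem_ball] at hw
      rw [mem_sphere] at hz
      rw [hz] at hw
      exact lt_irrefl _ hw
    have hGz : G z ≠ 0 := hsp z hz
    have hG1z : G₁ z ≠ 0 := by
      intro h
      apply hGz
      rw [hfac z, h, mul_zero]
    have hGfun : G = fun y => (y - w) * G₁ y := funext hfac
    have hder : deriv G z = G₁ z + (z - w) * deriv G₁ z := by
      rw [hGfun]
      have h1 : HasDerivAt (fun y => (y - w) * G₁ y)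
          (1 * G₁ z + (z - w) * deriv G₁ z) z :=
        (((hasDerivAt_id z).sub_const w)).mul (hG1an z hzK).differentiableAt.hasDerivAt
      rw [h1.deriv]
      ring
    simp only
    rw [hder, hfac z]
    field_simp
  have hint : rcInt R G = ∮ z in C((0:ℂ), R), ((z - w)⁻¹ + deriv G₁ z / G₁ z) :=
    circleIntegral.integral_congr hR.le hkey
  have hi1 : CircleIntegrable (fun z => (z - w)⁻¹) 0 R := by
    apply ContinuousOn.circleIntegrable hR.le
    intro z hz
    apply ContinuousWithinAt.inv₀
    · exact (continuous_id.sub continuous_const).continuousWithinAt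
    · intro h
      rw [sub_eq_zero] at h
      subst h
      rw [mem_ball] at hw
      rw [mem_sphere] at hz
      rw [hz] at hw
      exact lt_irrefl _ hw
  have hi2 : CircleIntegrable (fun z => deriv G₁ z / G₁ z) 0 R := by
    apply ContinuousOn.circleIntegrable hR.le
    apply ContinuousOn.div
    · exact (hG1an.deriv.continuousOn).mono sphere_subset_closedBall
    · exact hG1an.continuousOn.mono sphere_subset_closedBall
    · intro z hz
      intro h
      apply hsp z hz
      rw [rdslope_eq hGw z, ← hG₁, h, mul_zero]
  have hadd : (∮ z in C((0:ℂ), R), ((z - w)⁻¹ + deriv G₁ z / G₁ z))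
      = (∮ z in C((0:ℂ), R), (z - w)⁻¹) + ∮ z in C((0:ℂ), R), deriv G₁ z / G₁ z :=
    rcircle_add hi1 hi2
  rw [hint, hadd, circleIntegral.integral_sub_inv_of_mem_ball hw]
  rfl

lemma rcInt_rouche {R R' : ℝ} (hR : 0 < R) (hRR' : R < R') {F : ℂ → ℂ}
    (hF : AnalyticOnNhd ℂ F (closedBall 0 R'))
    (hb : ∀ z ∈ sphere (0:ℂ) R, ‖F z - z^2‖ < ‖z^2‖) :
    rcInt R F = 2 * (2 * Real.pi * I) := by
  have hFb : AnalyticOnNhd ℂ F (ball 0 R') := hF.mono ball_subset_closedBall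
  have hsubK : sphere (0:ℂ) R ⊆ closedBall (0:ℂ) R' := fun z hz => by
    rw [mem_sphere] at hz; rw [mem_closedBall]; rw [hz]; exact hRR'.le
  have hFne : ∀ z ∈ sphere (0:ℂ) R, F z ≠ 0 := by
    intro z hz h0
    have := hb z hz
    rw [h0, zero_sub, norm_neg] at this
    exact lt_irrefl _ this
  have hzne : ∀ z ∈ sphere (0:ℂ) R, z ≠ 0 := by
    intro z hz h0
    rw [mem_sphere, dist_zero_right, h0] at hz
    simp at hz
    linarith
  -- the derivative statement
  have hder : ∀ z ∈ sphere (0:ℂ) R,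
      HasDerivWithinAt (fun y => Complex.log (F y / y^2))
        (deriv F z / F z - 2 * z⁻¹) (sphere (0:ℂ) R) z := by
    intro z hz
    have hz0 : z ≠ 0 := hzne z hz
    have hz2 : (z:ℂ)^2 ≠ 0 := pow_ne_zero 2 hz0
    have hFz : F z ≠ 0 := hFne z hz
    have hFder : HasDerivAt F (deriv F z) z :=
      (hF z (hsubK hz)).differentiableAt.hasDerivAt
    have hq : HasDerivAt (fun y => F y / y^2)
        ((deriv F z * z^2 - F z * (↑2 * z^(2-1))) / (z^2)^2) z :=
      hFder.div (hasDerivAt_pow 2 z) hz2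
    have hslit : F z / z^2 ∈ Complex.slitPlane := by
      rw [Complex.mem_slitPlane_iff]
      left
      have h5 : ‖F z / z^2 - 1‖ < 1 := by
        rw [div_sub_one hz2, norm_div]
        rw [div_lt_one (norm_pos_iff.mpr hz2)]
        exact hb z hz
      have h6 : |(F z / z^2 - 1).re| ≤ ‖F z / z^2 - 1‖ :=
        Complex.abs_re_le_norm _
      have h7 : (F z / z^2).re = (F z/z^2 - 1).re + 1 := by
        simp [Complex.sub_re]
      rw [h7]
      linarith [(abs_le.1 h6).1]
    have hlog := hq.clog hslit
    have heq : ((deriv F z * z^2 - F z * (↑2 * z^(2-1))) / (z^2)^2) / (F z / z^2)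
        = deriv F z / F z - 2 * z⁻¹ := by
      field_simp
      ring
    rw [heq] at hlog
    exact hlog.hasDerivWithinAt
  have hzero : (∮ z in C((0:ℂ), R), (deriv F z / F z - 2 * z⁻¹)) = 0 :=
    circleIntegral.integral_eq_zero_of_hasDerivWithinAt hR.le hder
  have hi1 : CircleIntegrable (fun z => deriv F z / F z) 0 R := by
    apply ContinuousOn.circleIntegrable hR.le
    exact ((hF.deriv.continuousOn).mono hsubK).div
      ((hF.continuousOn).mono hsubK) hFne
  have hi2 : CircleIntegrable (fun z => 2 * z⁻¹ : ℂ → ℂ) 0 R := by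
    apply ContinuousOn.circleIntegrable hR.le
    exact continuousOn_const.mul (ContinuousOn.inv₀ continuousOn_id hzne)
  have hsub := circleIntegral.integral_sub hi1 hi2
  rw [hzero] at hsub
  have h2 : (∮ z in C((0:ℂ), R), 2 * z⁻¹) = 2 * (2 * Real.pi * I) := by
    rw [circleIntegral.integral_const_mul]
    have : (∮ z in C((0:ℂ), R), z⁻¹) = ∮ z in C((0:ℂ), R), (z - 0)⁻¹ := by
      apply circleIntegral.integral_congr hR.le
      intro z hz
      simp
    rw [this, circleIntegral.integral_sub_inv_of_mem_ball (mem_ball_self hR)]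
  rw [h2] at hsub
  have : rcInt R F = 2 * (2 * Real.pi * I) := by
    rw [rcInt]
    linear_combination -hsub
  exact this
lemma rno_neg {R : ℝ} (hR : 0 < R) {G : ℂ → ℂ}
    (hG : AnalyticOnNhd ℂ G (closedBall 0 R))
    (hsp : ∀ z ∈ sphere (0:ℂ) R, G z ≠ 0)
    (hc : rcInt R G = -(2 * Real.pi * I)) : False := by
  have hpi : (2 * (Real.pi:ℂ) * I) ≠ 0 := by
    simp [Real.pi_ne_zero, Complex.I_ne_zero]
  have hRsph : (R:ℂ) ∈ sphere (0:ℂ) R := by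
    simp [Complex.dist_eq, Complex.norm_real, abs_of_pos hR]
  have hspx : ∃ z ∈ sphere (0:ℂ) R, G z ≠ 0 := ⟨(R:ℂ), hRsph, hsp _ hRsph⟩
  obtain ⟨R', hRR', hG2⟩ := rext_an hR.le hG
  have hfin := rzeros_finite hRR'.le hG2 hspx
  set zs := {z ∈ closedBall (0:ℂ) R | G z = 0} with hzs
  classical
  set Z := hfin.toFinset with hZ
  set nf : ℂ → ℕ := fun v =>
    if h : v ∈ zs then
      (rorder_bound (hG v h.1) (rnot_ev_zero hRR'.le hG2 hspx h.1)).choose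
    else 0 with hnf
  set N := ∑ v ∈ Z, nf v with hN
  -- the descent chain
  have chain : ∀ m : ℕ, ∃ w : Fin m → ℂ,
      (∀ i, w i ∈ ball (0:ℂ) R ∧ G (w i) = 0) ∧
      ∃ G' : ℂ → ℂ, AnalyticOnNhd ℂ G' (closedBall 0 R) ∧
        (∀ z, G z = (∏ i, (z - w i)) * G' z) ∧
        rcInt R G' = -(1 + (m:ℂ)) * (2 * Real.pi * I) := by
    intro m
    induction m with
    | zero =>
      refine ⟨fun i => i.elim0, fun i => i.elim0, G, hG, ?_, ?_⟩
      · intro z; simp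
      · rw [hc]; push_cast; ring
    | succ m ih =>
      obtain ⟨w, hw, G', hG'an, hfac, hci⟩ := ih
      have hspG' : ∀ z ∈ sphere (0:ℂ) R, G' z ≠ 0 := by
        intro z hz h0
        apply hsp z hz
        rw [hfac z, h0, mul_zero]
      have hcine : rcInt R G' ≠ 0 := by
        rw [hci]
        apply mul_ne_zero _ hpi
        rw [neg_ne_zero]
        have : ((1 + m : ℕ) : ℂ) ≠ 0 := Nat.cast_ne_zero.mpr (by omega)
        push_cast at this
        exact this
      have hex : ∃ v ∈ closedBall (0:ℂ) R, G' v = 0 := by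
        by_contra hno
        push_neg at hno
        exact hcine (rcInt_zero hR hG'an hno)
      obtain ⟨v, hvK, hG'v⟩ := hex
      have hvball : v ∈ ball (0:ℂ) R := by
        rw [mem_ball]
        rcases lt_or_eq_of_le (mem_closedBall.mp hvK) with h | h
        · exact h
        · exact absurd (hG'v) (hspG' v (by rwa [mem_sphere]))
      have hGv : G v = 0 := by
        rw [hfac v, hG'v, mul_zero]
      refine ⟨Fin.snoc w v, ?_, dslope G' v, rdslope_an hG'an (ball_subset_closedBall hvball), ?_, ?_⟩
      · intro i
        refine Fin.lastCases ?_ ?_ i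
        · simp only [Fin.snoc_last]
          exact ⟨hvball, hGv⟩
        · intro j
          simp only [Fin.snoc_castSucc]
          exact hw j
      · intro z
        rw [hfac z, rdslope_eq hG'v z]
        rw [Fin.prod_univ_castSucc]
        simp only [Fin.snoc_castSucc, Fin.snoc_last]
        ring
      · have := rcInt_dslope hR hG'an hspG' hvball hG'v
        rw [hci] at this
        have h2 : rcInt R (dslope G' v) = -(1 + (m:ℂ)) * (2 * Real.pi * I) - 2 * Real.pi * I := by
          linear_combination -this
        rw [h2]
        push_cast
        ring
  obtain ⟨w, hw, G', hG'an, hfac, hci⟩ := chain (N + 1)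
  have hwZ : ∀ i, w i ∈ Z := by
    intro i
    rw [hZ, Set.Finite.mem_toFinset]
    exact ⟨ball_subset_closedBall (hw i).1, (hw i).2⟩
  have hcard : (Finset.univ : Finset (Fin (N+1))).card
      = ∑ v ∈ Z, (Finset.univ.filter fun i => w i = v).card :=
    Finset.card_eq_sum_card_fiberwise (fun i _ => hwZ i)
  have hpig : ∃ v ∈ Z, nf v < (Finset.univ.filter fun i => w i = v).card := by
    by_contra hno
    push_neg at hno
    have : ∑ v ∈ Z, (Finset.univ.filter fun i => w i = v).card ≤ N := by
      exact Finset.sum_le_sum hno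
    have hcard' : N + 1 = ∑ v ∈ Z, (Finset.univ.filter fun i => w i = v).card := by
      simpa using hcard
    exact absurd (hcard'.le.trans this) (by omega)
  obtain ⟨v, hvZ, hvlt⟩ := hpig
  have hvzs : v ∈ zs := by rwa [hZ, Set.Finite.mem_toFinset] at hvZ
  set j := (Finset.univ.filter fun i => w i = v).card with hj
  have hfac2 : ∀ z, G z = (z - v)^j *
      ((∏ i ∈ Finset.univ.filter (fun i => ¬ w i = v), (z - w i)) * G' z) := by
    intro z
    rw [hfac z]
    rw [← Finset.prod_filter_mul_prod_filter_not Finset.univ (fun i => w i = v)]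
    have : ∏ i ∈ Finset.univ.filter (fun i => w i = v), (z - w i) = (z - v)^j := by
      rw [Finset.prod_congr rfl (fun i hi => by
        rw [(Finset.mem_filter.mp hi).2]), Finset.prod_const, hj]
    rw [this]
    ring
  have hHan : AnalyticAt ℂ (fun z =>
      (∏ i ∈ Finset.univ.filter (fun i => ¬ w i = v), (z - w i)) * G' z) v := by
    apply AnalyticAt.mul
    · exact Finset.analyticAt_fun_prod _ (fun i _ => analyticAt_id.sub analyticAt_const)
    · exact hG'an v hvzs.1
  have hspec := (rorder_bound (hG v hvzs.1)
      (rnot_ev_zero hRR'.le hG2 hspx hvzs.1)).choose_spec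
  have hle : j ≤ nf v := by
    have hnfv : nf v = (rorder_bound (hG v hvzs.1)
        (rnot_ev_zero hRR'.le hG2 hspx hvzs.1)).choose := by
      rw [hnf]; exact dif_pos hvzs
    rw [hnfv]
    exact hspec j _ hHan (Filter.Eventually.of_forall hfac2)
  omega
theorem stmt13 (R : ℝ) (hR : 0 < R) (α βp βm : ℂ → ℂ)
    (hα : AnalyticOnNhd ℂ α (Metric.closedBall 0 R))
    (hβp : AnalyticOnNhd ℂ βp (Metric.closedBall 0 R))
    (hβm : AnalyticOnNhd ℂ βm (Metric.closedBall 0 R))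
    (hαs : ∀ z : ℂ, ‖z‖ = R → ‖α z‖ / R < 1 / 3)
    (hps : ∀ z : ℂ, ‖z‖ = R → ‖βp z‖ / R < 1 / 3)
    (hms : ∀ z : ℂ, ‖z‖ = R → ‖βm z‖ / R < 1 / 3) :
    ∃ z₁ z₂ : ℂ, z₁ ∈ Metric.ball (0 : ℂ) R ∧ z₂ ∈ Metric.ball (0 : ℂ) R ∧
      ∃ g : ℂ → ℂ, AnalyticOnNhd ℂ g (Metric.closedBall 0 R) ∧
        (∀ z ∈ Metric.closedBall (0 : ℂ) R, g z ≠ 0) ∧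
        ∀ z ∈ Metric.closedBall (0 : ℂ) R,
          (z - α z) ^ 2 - βp z * βm z = (z - z₁) * (z - z₂) * g z := by
  set F : ℂ → ℂ := fun z => (z - α z)^2 - βp z * βm z with hF
  have hFan : AnalyticOnNhd ℂ F (closedBall 0 R) := fun z hz =>
    ((analyticAt_id.sub (hα z hz)).pow 2).sub ((hβp z hz).mul (hβm z hz))
  have hsph : ∀ z : ℂ, z ∈ sphere (0:ℂ) R → ‖z‖ = R := by
    intro z hz
    rwa [mem_sphere, Complex.dist_eq, sub_zero] at hz
  have hpi : (2 * (Real.pi:ℂ) * I) ≠ 0 := by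
    simp [Real.pi_ne_zero, Complex.I_ne_zero]
  have hb : ∀ z ∈ sphere (0:ℂ) R, ‖F z - z^2‖ < ‖z^2‖ := by
    intro z hz
    have hzR : ‖z‖ = R := hsph z hz
    have ha : ‖α z‖ < R/3 := by
      have := hαs z hzR
      rw [div_lt_div_iff₀ hR (by norm_num : (0:ℝ) < 3)] at this
      linarith
    have hp : ‖βp z‖ < R/3 := by
      have := hps z hzR
      rw [div_lt_div_iff₀ hR (by norm_num : (0:ℝ) < 3)] at this
      linarith
    have hm : ‖βm z‖ < R/3 := by
      have := hms z hzR
      rw [div_lt_div_iff₀ hR (by norm_num : (0:ℝ) < 3)] at this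
      linarith
    have key : F z - z^2 = (α z * α z - 2 * z * α z) - βp z * βm z := by
      rw [hF]; ring
    have t1 : ‖(α z * α z - 2 * z * α z) - βp z * βm z‖
        ≤ ‖α z * α z - 2 * z * α z‖ + ‖βp z * βm z‖ := by
      exact
        norm_sub_le (α z * α z - 2 * z * α z) (βp z * βm z)
    have t2 : ‖α z * α z - 2 * z * α z‖
        ≤ ‖α z * α z‖ + ‖2 * z * α z‖ := by
      exact norm_sub_le (α z * α z) (2 * z * α z)
    have e1 : ‖α z * α z‖ = ‖α z‖ * ‖α z‖ := norm_mul _ _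
    have e2 : ‖2 * z * α z‖ = 2 * R * ‖α z‖ := by
      rw [norm_mul, norm_mul, Complex.norm_two, hzR]
    have e3 : ‖βp z * βm z‖ = ‖βp z‖ * ‖βm z‖ := norm_mul _ _
    have e4 : ‖z^2‖ = R^2 := by
      rw [norm_pow, hzR]
    rw [key, e4]
    have habs0 : 0 ≤ ‖α z‖ := norm_nonneg _
    have habs1 : 0 ≤ ‖βp z‖ := norm_nonneg _
    have habs2 : 0 ≤ ‖βm z‖ := norm_nonneg _
    nlinarith [t1, t2, e1, e2, e3]
  have hFsp : ∀ z ∈ sphere (0:ℂ) R, F z ≠ 0 := by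
    intro z hz h0
    have := hb z hz
    rw [h0, zero_sub, norm_neg] at this
    exact lt_irrefl _ this
  obtain ⟨R', hRR', hFan'⟩ := rext_an hR.le hFan
  have hI : rcInt R F = 2 * (2 * Real.pi * I) := rcInt_rouche hR hRR' hFan' hb
  -- first zero
  have hex1 : ∃ v ∈ closedBall (0:ℂ) R, F v = 0 := by
    by_contra hno
    push_neg at hno
    rw [rcInt_zero hR hFan hno] at hI
    exact hpi (by linear_combination -hI/2)
  obtain ⟨z₁, hz₁K, hFz₁⟩ := hex1
  have hz₁b : z₁ ∈ ball (0:ℂ) R := by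
    rw [mem_ball]
    rcases lt_or_eq_of_le (mem_closedBall.mp hz₁K) with h | h
    · exact h
    · exact absurd hFz₁ (hFsp z₁ (by rwa [mem_sphere]))
  set F₁ : ℂ → ℂ := dslope F z₁ with hF₁
  have hF1an : AnalyticOnNhd ℂ F₁ (closedBall 0 R) :=
    rdslope_an hFan (ball_subset_closedBall hz₁b)
  have hfac1 : ∀ z, F z = (z - z₁) * F₁ z := rdslope_eq hFz₁
  have hci1 : rcInt R F₁ = 2 * Real.pi * I := by
    have := rcInt_dslope hR hFan hFsp hz₁b hFz₁
    rw [hI] at this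
    linear_combination -this
  have hF1sp : ∀ z ∈ sphere (0:ℂ) R, F₁ z ≠ 0 := by
    intro z hz h0
    exact hFsp z hz (by rw [hfac1 z, h0, mul_zero])
  -- second zero
  have hex2 : ∃ v ∈ closedBall (0:ℂ) R, F₁ v = 0 := by
    by_contra hno
    push_neg at hno
    rw [rcInt_zero hR hF1an hno] at hci1
    exact hpi hci1.symm
  obtain ⟨z₂, hz₂K, hFz₂⟩ := hex2
  have hz₂b : z₂ ∈ ball (0:ℂ) R := by
    rw [mem_ball]
    rcases lt_or_eq_of_le (mem_closedBall.mp hz₂K) with h | h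
    · exact h
    · exact absurd hFz₂ (hF1sp z₂ (by rwa [mem_sphere]))
  set F₂ : ℂ → ℂ := dslope F₁ z₂ with hF₂
  have hF2an : AnalyticOnNhd ℂ F₂ (closedBall 0 R) :=
    rdslope_an hF1an (ball_subset_closedBall hz₂b)
  have hfac2 : ∀ z, F₁ z = (z - z₂) * F₂ z := rdslope_eq hFz₂
  have hci2 : rcInt R F₂ = 0 := by
    have := rcInt_dslope hR hF1an hF1sp hz₂b hFz₂
    rw [hci1] at this
    linear_combination -this
  have hF2sp : ∀ z ∈ sphere (0:ℂ) R, F₂ z ≠ 0 := by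
    intro z hz h0
    exact hF1sp z hz (by rw [hfac2 z, h0, mul_zero])
  -- F₂ has no zeros at all
  have hF2ne : ∀ z ∈ closedBall (0:ℂ) R, F₂ z ≠ 0 := by
    intro v hvK h0
    have hvb : v ∈ ball (0:ℂ) R := by
      rw [mem_ball]
      rcases lt_or_eq_of_le (mem_closedBall.mp hvK) with h | h
      · exact h
      · exact absurd h0 (hF2sp v (by rwa [mem_sphere]))
    have hGan : AnalyticOnNhd ℂ (dslope F₂ v) (closedBall 0 R) :=
      rdslope_an hF2an (ball_subset_closedBall hvb)
    have hfacG : ∀ z, F₂ z = (z - v) * dslope F₂ v z := rdslope_eq h0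
    have hGsp : ∀ z ∈ sphere (0:ℂ) R, dslope F₂ v z ≠ 0 := by
      intro z hz hg0
      exact hF2sp z hz (by rw [hfacG z, hg0, mul_zero])
    have hciG : rcInt R (dslope F₂ v) = -(2 * Real.pi * I) := by
      have := rcInt_dslope hR hF2an hF2sp hvb h0
      rw [hci2] at this
      linear_combination -this
    exact rno_neg hR hGan hGsp hciG
  refine ⟨z₁, z₂, hz₁b, hz₂b, F₂, hF2an, hF2ne, fun z hz => ?_⟩
  have : F z = (z - z₁) * (z - z₂) * F₂ z := by
    rw [hfac1 z, hfac2 z]; ring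
  rw [hF] at this
  exact this
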